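/- Continuity of binary consumer surplus in the cost parameter, with vanishing endpoints: the function CS(k) = τ(k)·μ¹_2(k)·(ω−1), where μ¹_2(k) = (e^{1/k}−1)/(e^{ω/k}−1), μ²_2(k) = (e^{ω/k}−e^{(ω−1)/k})/(e^{ω/k}−1), and τ(k) = (μ²_2(k) − μ*)/(μ²_2(k) − μ¹_2(k)) truncated to [0,1], is continuous on (0,∞), tends to 0 as k → 0⁺, and, if μ* > 1/ω, tends to 0 as k → ∞ (since eventually μ²_2(k) < μ* forces τ = 0, i.e., no segmentation); hence if CS(k₀) > 0 for some k₀, CS is non-monotone on (0,∞). -/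

import Mathlib

open Filter Topology

noncomputable def seg1 (ω k : ℝ) : ℝ :=
  (Real.exp (1 / k) - 1) / (Real.exp (ω / k) - 1)

noncomputable def seg2 (ω k : ℝ) : ℝ :=
  (Real.exp (ω / k) - Real.exp ((ω - 1) / k)) / (Real.exp (ω / k) - 1)

/-- Weight on the low-price segment, truncated to `[0,1]`. -/
noncomputable def segWeight (ω μstar k : ℝ) : ℝ :=
  max 0 (min 1 ((seg2 ω k - μstar) / (seg2 ω k - seg1 ω k)))

/-- Consumer surplus as a function of the cost parameter `k`. -/
noncomputable def CS (ω μstar k : ℝ) : ℝ :=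
  segWeight ω μstar k * seg1 ω k * (ω - 1)

private lemma exp_sub_one_pos {x : ℝ} (hx : 0 < x) : 0 < Real.exp x - 1 := by
  have := Real.exp_lt_exp.mpr hx
  simp only [Real.exp_zero] at this
  linarith

private lemma denom_pos {ω k : ℝ} (hω : 1 < ω) (hk : 0 < k) :
    0 < Real.exp (ω / k) - 1 :=
  exp_sub_one_pos (div_pos (by linarith) hk)

private lemma seg1_nonneg {ω k : ℝ} (hω : 1 < ω) (hk : 0 < k) : 0 ≤ seg1 ω k :=
  le_of_lt (div_pos (exp_sub_one_pos (div_pos one_pos hk)) (denom_pos hω hk))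

private lemma gap_eq {ω k : ℝ} : seg2 ω k - seg1 ω k =
    (Real.exp ((ω - 1) / k) - 1) * (Real.exp (1 / k) - 1) / (Real.exp (ω / k) - 1) := by
  unfold seg1 seg2
  rw [div_sub_div_same]
  congr 1
  have h : ω / k = (ω - 1) / k + 1 / k := by rw [← add_div]; ring_nf
  rw [h, Real.exp_add]; ring

private lemma gap_pos {ω k : ℝ} (hω : 1 < ω) (hk : 0 < k) :
    0 < seg2 ω k - seg1 ω k := by
  rw [gap_eq]
  exact div_pos (mul_pos (exp_sub_one_pos (div_pos (by linarith) hk))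
    (exp_sub_one_pos (div_pos one_pos hk))) (denom_pos hω hk)

private lemma segWeight_mem {ω μstar k : ℝ} :
    0 ≤ segWeight ω μstar k ∧ segWeight ω μstar k ≤ 1 := by
  constructor
  · exact le_max_left _ _
  · exact max_le zero_le_one (min_le_left _ _)

private lemma CS_bounds {ω μstar k : ℝ} (hω : 1 < ω) (hk : 0 < k) :
    0 ≤ CS ω μstar k ∧ CS ω μstar k ≤ seg1 ω k * (ω - 1) := by
  obtain ⟨h0, h1⟩ := segWeight_mem (ω := ω) (μstar := μstar) (k := k)
  have hs := seg1_nonneg hω hk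
  unfold CS
  constructor
  · exact mul_nonneg (mul_nonneg h0 hs) (by linarith)
  · nlinarith [mul_nonneg (mul_nonneg (sub_nonneg.mpr h1) hs)
      (sub_nonneg.mpr (le_of_lt hω))]

private lemma cont_aux (c : ℝ) :
    ContinuousOn (fun k : ℝ => Real.exp (c / k)) (Set.Ioi 0) :=
  Real.continuous_exp.comp_continuousOn
    (continuousOn_const.div continuousOn_id fun x hx => ne_of_gt hx)

private lemma cont_seg1 {ω : ℝ} (hω : 1 < ω) :
    ContinuousOn (seg1 ω) (Set.Ioi 0) :=
  ((cont_aux 1).sub continuousOn_const).div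
    ((cont_aux ω).sub continuousOn_const)
    (fun k hk => ne_of_gt (denom_pos hω hk))

private lemma cont_seg2 {ω : ℝ} (hω : 1 < ω) :
    ContinuousOn (seg2 ω) (Set.Ioi 0) :=
  ((cont_aux ω).sub (cont_aux (ω - 1))).div
    ((cont_aux ω).sub continuousOn_const)
    (fun k hk => ne_of_gt (denom_pos hω hk))

private lemma cont_CS {ω μstar : ℝ} (hω : 1 < ω) :
    ContinuousOn (CS ω μstar) (Set.Ioi 0) := by
  have hw : ContinuousOn (segWeight ω μstar) (Set.Ioi 0) := by
    have hr : ContinuousOn (fun k => (seg2 ω k - μstar) / (seg2 ω k - seg1 ω k))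
        (Set.Ioi (0:ℝ)) :=
      ((cont_seg2 hω).sub continuousOn_const).div
        ((cont_seg2 hω).sub (cont_seg1 hω))
        (fun k hk => ne_of_gt (gap_pos hω hk))
    have := ContinuousOn.sup (continuousOn_const (c := (0:ℝ)))
      (ContinuousOn.inf (continuousOn_const (c := (1:ℝ))) hr)
    exact this
  exact (hw.mul (cont_seg1 hω)).mul continuousOn_const

private lemma seg1_tendsto_zero {ω : ℝ} (hω : 1 < ω) :
    Tendsto (seg1 ω) (𝓝[>] (0:ℝ)) (𝓝 0) := by
  have hbig : Tendsto (fun k : ℝ => (1 - ω) / k) (𝓝[>] (0:ℝ)) atBot := by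
    have h1 : Tendsto (fun k : ℝ => k⁻¹) (𝓝[>] (0:ℝ)) atTop := tendsto_inv_nhdsGT_zero
    have := h1.const_mul_atTop_of_neg (show (1 - ω) < 0 by linarith)
    simpa [div_eq_mul_inv] using this
  have hupper : Tendsto (fun k : ℝ => 2 * Real.exp ((1 - ω) / k)) (𝓝[>] (0:ℝ)) (𝓝 0) := by
    have := (Real.tendsto_exp_atBot.comp hbig).const_mul 2
    simpa using this
  refine squeeze_zero' ?_ ?_ hupper
  · filter_upwards [self_mem_nhdsWithin] with k hk
    exact seg1_nonneg hω hk
  · have hmem : Set.Ioc (0:ℝ) (ω / Real.log 2) ∈ 𝓝[>] (0:ℝ) := by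
      apply Ioc_mem_nhdsGT_of_mem
      constructor
      · exact le_refl 0
      · exact div_pos (by linarith) (Real.log_pos (by norm_num))
    filter_upwards [hmem] with k hk
    obtain ⟨hk0, hkle⟩ := hk
    -- from k ≤ ω / log 2 we get log 2 ≤ ω / k, so 2 ≤ exp (ω/k)
    have hlog2 : (0:ℝ) < Real.log 2 := Real.log_pos (by norm_num)
    have h2 : Real.log 2 ≤ ω / k := by
      rw [le_div_iff₀ hk0]
      calc Real.log 2 * k ≤ Real.log 2 * (ω / Real.log 2) := by
            apply mul_le_mul_of_nonneg_left hkle (le_of_lt hlog2)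
        _ = ω := by field_simp
    have h2' : (2:ℝ) ≤ Real.exp (ω / k) := by
      calc (2:ℝ) = Real.exp (Real.log 2) := (Real.exp_log (by norm_num)).symm
        _ ≤ Real.exp (ω / k) := Real.exp_le_exp.mpr h2
    have hd : 0 < Real.exp (ω / k) - 1 := denom_pos hω hk0
    have hineq : Real.exp (ω / k) ≤ 2 * (Real.exp (ω / k) - 1) := by linarith
    have hnum : Real.exp (1 / k) - 1 ≤ Real.exp (1 / k) := by linarith
    have hexp : Real.exp ((1 - ω) / k) = Real.exp (1 / k) / Real.exp (ω / k) := by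
      rw [← Real.exp_sub]; congr 1; ring
    have he1 := Real.exp_pos (1 / k)
    have heω := Real.exp_pos (ω / k)
    have key : (Real.exp (1 / k) - 1) * Real.exp (ω / k)
        ≤ 2 * Real.exp (1 / k) * (Real.exp (ω / k) - 1) := by nlinarith
    have hinv : Real.exp (ω / k) * (Real.exp (ω / k))⁻¹ = 1 :=
      mul_inv_cancel₀ (ne_of_gt heω)
    have hq : Real.exp (1 / k) / Real.exp (ω / k) * Real.exp (ω / k)
        = Real.exp (1 / k) := div_mul_cancel₀ _ (ne_of_gt heω)
    unfold seg1
    rw [div_le_iff₀ hd, hexp]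
    nlinarith [key, hq, hd, heω, div_pos he1 heω]

private lemma CS_tendsto_zero_right {ω μstar : ℝ} (hω : 1 < ω) :
    Tendsto (CS ω μstar) (𝓝[>] (0:ℝ)) (𝓝 0) := by
  apply squeeze_zero' (t₀ := 𝓝[>] (0:ℝ))
  · filter_upwards [self_mem_nhdsWithin] with k hk
    exact (CS_bounds hω hk).1
  · filter_upwards [self_mem_nhdsWithin] with k hk
    exact (CS_bounds hω hk).2
  · have := (seg1_tendsto_zero hω).mul_const (ω - 1)
    simpa using this

private lemma seg2_tendsto {ω : ℝ} (hω : 1 < ω) :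
    Tendsto (seg2 ω) atTop (𝓝 (1 / ω)) := by
  have hωpos : (0:ℝ) < ω := by linarith
  have hslope : Tendsto (slope Real.exp 0) (𝓝[≠] (0:ℝ)) (𝓝 1) := by
    have := hasDerivAt_iff_tendsto_slope.mp (Real.hasDerivAt_exp 0)
    simpa [Real.exp_zero] using this
  have hinvpos : Tendsto (fun k : ℝ => 1 / k) atTop (𝓝[>] (0:ℝ)) := by
    apply tendsto_nhdsWithin_of_tendsto_nhds_of_eventually_within
    · simpa using tendsto_inv_atTop_zero
    · filter_upwards [eventually_gt_atTop (0:ℝ)] with k hk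
      exact one_div_pos.mpr hk
  have hinv : Tendsto (fun k : ℝ => 1 / k) atTop (𝓝[≠] (0:ℝ)) :=
    hinvpos.mono_right (nhdsWithin_mono _ fun x hx => ne_of_gt hx)
  have hωinv : Tendsto (fun k : ℝ => ω / k) atTop (𝓝[≠] (0:ℝ)) := by
    apply Tendsto.mono_right _ (nhdsWithin_mono _ fun x (hx : x ∈ Set.Ioi (0:ℝ)) => ne_of_gt hx)
    apply tendsto_nhdsWithin_of_tendsto_nhds_of_eventually_within
    · have := tendsto_inv_atTop_zero.const_mul ω
      simpa [div_eq_mul_inv] using this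
    · filter_upwards [eventually_gt_atTop (0:ℝ)] with k hk
      exact div_pos hωpos hk
  have hexp1 : Tendsto (fun k : ℝ => Real.exp ((ω - 1) / k)) atTop (𝓝 1) := by
    have hx : Tendsto (fun k : ℝ => (ω - 1) / k) atTop (𝓝 0) :=
      tendsto_const_nhds.div_atTop tendsto_id
    have := (Real.continuous_exp.tendsto 0).comp hx
    simpa [Real.exp_zero, Function.comp_def] using this
  have hA : Tendsto (fun k : ℝ => slope Real.exp 0 (1 / k)) atTop (𝓝 1) :=
    hslope.comp hinv
  have hB : Tendsto (fun k : ℝ => slope Real.exp 0 (ω / k)) atTop (𝓝 1) :=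
    hslope.comp hωinv
  have hlim : Tendsto (fun k : ℝ =>
      Real.exp ((ω - 1) / k) * slope Real.exp 0 (1 / k) / (ω * slope Real.exp 0 (ω / k)))
      atTop (𝓝 (1 / ω)) := by
    have := ((hexp1.mul hA).div ((tendsto_const_nhds (x := ω)).mul hB)
      (by simpa using ne_of_gt hωpos))
    simpa [Pi.div_def] using this
  apply hlim.congr'
  filter_upwards [eventually_gt_atTop (0:ℝ)] with k hk
  have hk0 : k ≠ 0 := ne_of_gt hk
  have hik : (1:ℝ) / k ≠ 0 := one_div_ne_zero hk0
  have hωk : ω / k ≠ 0 := div_ne_zero (ne_of_gt hωpos) hk0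
  unfold seg2
  rw [slope_def_field, slope_def_field]
  simp only [Real.exp_zero]
  have hnum : Real.exp (ω / k) - Real.exp ((ω - 1) / k) =
      Real.exp ((ω - 1) / k) * (Real.exp (1 / k) - 1) := by
    have h : ω / k = (ω - 1) / k + 1 / k := by rw [← add_div]; ring_nf
    rw [h, Real.exp_add]; ring
  have hdne : Real.exp (ω / k) - 1 ≠ 0 := ne_of_gt (denom_pos hω hk)
  rw [hnum]
  field_simp
  ring

private lemma CS_eventually_zero {ω μstar : ℝ} (hω : 1 < ω) (hμ : 1 / ω < μstar) :
    ∀ᶠ k in atTop, CS ω μstar k = 0 := by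
  have hev : ∀ᶠ k in atTop, seg2 ω k < μstar :=
    (seg2_tendsto hω).eventually_lt_const hμ
  filter_upwards [hev, eventually_gt_atTop (0:ℝ)] with k hk hk0
  have hgap := gap_pos hω hk0
  have hr : (seg2 ω k - μstar) / (seg2 ω k - seg1 ω k) < 0 :=
    div_neg_of_neg_of_pos (by linarith) hgap
  have hmin : min 1 ((seg2 ω k - μstar) / (seg2 ω k - seg1 ω k)) ≤ 0 :=
    le_trans (min_le_right _ _) (le_of_lt hr)
  unfold CS segWeight
  rw [max_eq_left hmin]
  ring

theorem stmt_19 (ω μstar : ℝ) (hω : 1 < ω) (hμ : μstar ∈ Set.Ioo (1 / ω) 1) :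
    ContinuousOn (CS ω μstar) (Set.Ioi (0:ℝ)) ∧
    Tendsto (CS ω μstar) (𝓝[>] 0) (𝓝 0) ∧
    Tendsto (CS ω μstar) atTop (𝓝 0) ∧
    (∀ k₀ ∈ Set.Ioi (0:ℝ), 0 < CS ω μstar k₀ →
      ¬ MonotoneOn (CS ω μstar) (Set.Ioi (0:ℝ)) ∧
      ¬ AntitoneOn (CS ω μstar) (Set.Ioi (0:ℝ))) := by
  have hev0 := CS_eventually_zero (μstar := μstar) hω hμ.1
  refine ⟨cont_CS hω, CS_tendsto_zero_right hω, ?_, ?_⟩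
  · have heq : (fun _ : ℝ => (0:ℝ)) =ᶠ[atTop] CS ω μstar := by
      filter_upwards [hev0] with k hk
      exact hk.symm
    exact Tendsto.congr' heq tendsto_const_nhds
  · intro k₀ hk₀ hpos
    constructor
    · intro hmono
      obtain ⟨k₁, hk₁z, hk₁gt⟩ := (hev0.and (eventually_gt_atTop k₀)).exists
      have : CS ω μstar k₀ ≤ CS ω μstar k₁ :=
        hmono hk₀ (lt_trans hk₀ hk₁gt) (le_of_lt hk₁gt)
      rw [hk₁z] at this
      linarith
    · intro hanti
      have h1 : ∀ᶠ k in 𝓝[>] (0:ℝ), CS ω μstar k < CS ω μstar k₀ :=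
        (CS_tendsto_zero_right hω).eventually_lt_const hpos
      have h2 : Set.Ioo (0:ℝ) k₀ ∈ 𝓝[>] (0:ℝ) :=
        Ioo_mem_nhdsGT_of_mem ⟨le_refl 0, hk₀⟩
      obtain ⟨k₂, hk₂lt, hk₂mem⟩ := (h1.and (eventually_mem_set.mpr h2)).exists
      have : CS ω μstar k₀ ≤ CS ω μstar k₂ :=
        hanti hk₂mem.1 hk₀ (le_of_lt hk₂mem.2)
      linarith
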